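/- Let n ≥ 2, let 0 ≤ i < j ≤ n−1, and let m denote the order of f^B_i f^B_j in B_n. Then for every s with 1 ≤ s ≤ m−1 and every 0 ≤ k ≤ n−1, one has (f^B_i f^B_j)^s ≠ f^B_k; and for every s with 1 ≤ s ≤ m−2 and every 0 ≤ k ≤ n−1, one has (f^B_i f^B_j)^s f^B_i ≠ f^B_k. (Equivalently, the alternating (f^B_i, f^B_j)-cycles in the burnt pancake graph of B_n have no chords.) -/
import Mathlib

/-- The burnt pancake generator `f^B_m` of the hyperoctahedral group `B_n` of signed
permutations, modeled as a permutation of `Fin n × Bool` (a `0`-indexed position together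
with a sign, `false` meaning positive): it reverses and negates the first `m+1` entries,
sending `(a, s)` to `(m - a, !s)` whenever `a ≤ m` (and `m < n`), and fixing all other
points.  (In `1`-indexed terms, `f^B_m a = -(m + 2 - a)` for `1 ≤ a ≤ m + 1` and
`f^B_m a = a` for `m + 1 < a ≤ n`; for `m = 0` it is the sign change of the first entry.) -/
def bpancake (n m : ℕ) : Equiv.Perm (Fin n × Bool) :=
  Function.Involutive.toPerm
    (fun x => if h : (x.1 : ℕ) ≤ m ∧ m < n then
        (⟨m - (x.1 : ℕ), Nat.lt_of_le_of_lt (Nat.sub_le m x.1) h.2⟩, !x.2) else x)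
    (by
      intro x
      dsimp only
      by_cases h : (x.1 : ℕ) ≤ m ∧ m < n
      · rw [dif_pos h, dif_pos ⟨Nat.sub_le m (x.1 : ℕ), h.2⟩]
        exact Prod.ext (Fin.ext (Nat.sub_sub_self h.1)) (Bool.not_not x.2)
      · rw [dif_neg h, dif_neg h])

lemma bp_def' (n m : ℕ) (x : Fin n × Bool) :
    bpancake n m x = if h : (x.1 : ℕ) ≤ m ∧ m < n then
      (⟨m - (x.1 : ℕ), Nat.lt_of_le_of_lt (Nat.sub_le m x.1) h.2⟩, !x.2) else x := rfl

lemma bp_flip {n : ℕ} (m a : ℕ) {pa : a < n} {s : Bool} (ha : a ≤ m) (hm : m < n) :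
    bpancake n m (⟨a, pa⟩, s) = (⟨m - a, Nat.lt_of_le_of_lt (Nat.sub_le m a) hm⟩, !s) :=
  dif_pos ⟨ha, hm⟩

lemma bp_fix {n : ℕ} (m a : ℕ) {pa : a < n} {s : Bool} (h : m < a) :
    bpancake n m (⟨a, pa⟩, s) = (⟨a, pa⟩, s) :=
  dif_neg (fun hc => absurd hc.1 (Nat.not_le.mpr h))

lemma bp_sq (n m : ℕ) : bpancake n m * bpancake n m = 1 := by
  apply Equiv.ext
  intro x
  show bpancake n m (bpancake n m x) = x
  by_cases h : (x.1 : ℕ) ≤ m ∧ m < n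
  · rw [bp_def' n m x, dif_pos h, bp_def', dif_pos (⟨Nat.sub_le m (x.1 : ℕ), h.2⟩ :
      (((⟨m - (x.1 : ℕ), Nat.lt_of_le_of_lt (Nat.sub_le m x.1) h.2⟩ : Fin n), !x.2).1 : ℕ) ≤ m ∧ m < n)]
    exact Prod.ext (Fin.ext (Nat.sub_sub_self h.1)) (Bool.not_not x.2)
  · rw [bp_def' n m x, dif_neg h, bp_def' n m x, dif_neg h]

/-- No generator `f^B_k` commutes with `f^B_i f^B_j` when `i < j < n`. -/
lemma bp_lemA {n i j k : ℕ} (hij : i < j) (hjn : j < n) (hin : i < n) (hkn : k < n)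
    (hc : bpancake n k * (bpancake n i * bpancake n j) =
      bpancake n i * bpancake n j * bpancake n k) : False := by
  rcases lt_or_ge k i with hki | hik
  · -- witness (k, false)
    have h := DFunLike.congr_fun hc ((⟨k, hkn⟩ : Fin n), false)
    simp only [Equiv.Perm.mul_apply] at h
    rw [bp_flip j k (by omega) hjn] at h
    rw [bp_flip k k le_rfl hkn] at h
    rw [bp_flip j (k - k) (by omega) hjn] at h
    rw [bp_fix i (j - (k - k)) (by omega)] at h
    rcases le_or_gt (j - k) i with h2 | h2
    · rw [bp_flip i (j - k) h2 hin] at h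
      rw [bp_flip k (i - (j - k)) (by omega) hkn] at h
      simp at h
    · rw [bp_fix i (j - k) h2] at h
      rw [bp_fix k (j - k) (by omega)] at h
      simp at h
  · rcases le_or_gt k j with hkj | hkj
    · -- i ≤ k ≤ j, witness (j, false)
      have h := DFunLike.congr_fun hc ((⟨j, hjn⟩ : Fin n), false)
      simp only [Equiv.Perm.mul_apply] at h
      rw [bp_flip j j le_rfl hjn] at h
      rw [bp_flip i (j - j) (by omega) hin] at h
      rw [bp_flip k (i - (j - j)) (by omega) hkn] at h
      rcases lt_or_ge k j with h2 | h2
      · rw [bp_fix k j h2] at h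
        rw [bp_flip j j le_rfl hjn] at h
        rw [bp_flip i (j - j) (by omega) hin] at h
        simp at h
      · rw [bp_flip k j h2 hkn] at h
        rw [bp_flip j (k - j) (by omega) hjn] at h
        rw [bp_fix i (j - (k - j)) (by omega)] at h
        simp at h
    · -- k > j, witness (k, false)
      have h := DFunLike.congr_fun hc ((⟨k, hkn⟩ : Fin n), false)
      simp only [Equiv.Perm.mul_apply] at h
      rw [bp_fix j k (by omega)] at h
      rw [bp_fix i k (by omega)] at h
      rw [bp_flip k k le_rfl hkn] at h
      rw [bp_flip j (k - k) (by omega) hjn] at h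
      rw [bp_fix i (j - (k - k)) (by omega)] at h
      simp at h

/-- `f^B_k f^B_j ≠ f^B_i f^B_j f^B_k f^B_i` when `i < j < n`, `k ∉ {i,j}`, `k < n`. -/
lemma bp_lemB {n i j k : ℕ} (hij : i < j) (hjn : j < n) (hin : i < n) (hkn : k < n)
    (hki : k ≠ i) (hkj : k ≠ j)
    (hc : bpancake n k * bpancake n j =
      bpancake n i * bpancake n j * (bpancake n k * bpancake n i)) : False := by
  rcases lt_or_ge k i with h1 | h1
  · -- witness (j, false)
    have h := DFunLike.congr_fun hc ((⟨j, hjn⟩ : Fin n), false)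
    simp only [Equiv.Perm.mul_apply] at h
    rw [bp_fix i j (by omega)] at h
    rw [bp_fix k j (by omega)] at h
    rw [bp_flip j j le_rfl hjn] at h
    rw [bp_flip k (j - j) (by omega) hkn] at h
    rw [bp_flip i (j - j) (by omega) hin] at h
    simp only [Prod.mk.injEq, Fin.mk.injEq] at h
    omega
  · rcases lt_or_ge k j with h2 | h2
    · -- i < k < j, witness (0, false)
      have hik : i < k := lt_of_le_of_ne h1 (Ne.symm hki)
      have h := DFunLike.congr_fun hc ((⟨0, by omega⟩ : Fin n), false)
      simp only [Equiv.Perm.mul_apply] at h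
      rw [bp_flip i 0 (by omega) hin] at h
      rw [bp_flip k (i - 0) (by omega) hkn] at h
      rw [bp_flip j (k - (i - 0)) (by omega) hjn] at h
      rw [bp_fix i (j - (k - (i - 0))) (by omega)] at h
      rw [bp_flip j 0 (by omega) hjn] at h
      rw [bp_fix k (j - 0) (by omega)] at h
      simp only [Prod.mk.injEq, Fin.mk.injEq] at h
      omega
    · -- k > j, witness (k, false)
      have h := DFunLike.congr_fun hc ((⟨k, hkn⟩ : Fin n), false)
      simp only [Equiv.Perm.mul_apply] at h
      rw [bp_fix j k (by omega)] at h
      rw [bp_fix i k (by omega)] at h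
      rw [bp_flip k k le_rfl hkn] at h
      rw [bp_flip j (k - k) (by omega) hjn] at h
      rw [bp_fix i (j - (k - k)) (by omega)] at h
      simp at h

/-- Let `n ≥ 2`, `0 ≤ i < j ≤ n - 1`, and let `m` be the order of `f^B_i f^B_j` in
`B_n`.  Then for every `1 ≤ s ≤ m - 1` and every `0 ≤ k ≤ n - 1` one has
`(f^B_i f^B_j)^s ≠ f^B_k`, and for every `1 ≤ s ≤ m - 2` and every `0 ≤ k ≤ n - 1`
one has `(f^B_i f^B_j)^s f^B_i ≠ f^B_k`.  (Equivalently, the alternating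
`(f^B_i, f^B_j)`-cycles in the burnt pancake graph of `B_n` have no chords.) -/
theorem bpancake_cycles_no_chords (n i j : ℕ) (hn : 2 ≤ n) (hij : i < j)
    (hj : j ≤ n - 1) :
    (∀ s, 1 ≤ s → s ≤ orderOf (bpancake n i * bpancake n j) - 1 →
      ∀ k ≤ n - 1, (bpancake n i * bpancake n j) ^ s ≠ bpancake n k) ∧
    (∀ s, 1 ≤ s → s ≤ orderOf (bpancake n i * bpancake n j) - 2 →
      ∀ k ≤ n - 1, (bpancake n i * bpancake n j) ^ s * bpancake n i ≠ bpancake n k) := by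
  have hjn : j < n := by omega
  have hin : i < n := by omega
  constructor
  · intro s _ _ k hk hEq
    have hkn : k < n := by omega
    apply bp_lemA hij hjn hin hkn
    rw [← hEq]
    exact ((Commute.refl (bpancake n i * bpancake n j)).pow_left s).eq
  · intro s hs1 hs2 k hk hEq
    have hkn : k < n := by omega
    have hii := bp_sq n i
    have hjj := bp_sq n j
    have hEq2 : bpancake n k * bpancake n i = (bpancake n i * bpancake n j) ^ s := by
      rw [← hEq, mul_assoc, hii, mul_one]
    by_cases hki : k = i
    · subst hki
      rw [hii] at hEq2
      have hd := orderOf_dvd_of_pow_eq_one hEq2.symm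
      have := Nat.le_of_dvd (by omega) hd
      omega
    · by_cases hkj : k = j
      · subst hkj
        have hone : (bpancake n i * bpancake n k) ^ (s + 1) = 1 := by
          rw [pow_succ, ← hEq2, mul_assoc (bpancake n k) (bpancake n i),
            ← mul_assoc (bpancake n i) (bpancake n i) (bpancake n k), hii, one_mul, hjj]
        have hd := orderOf_dvd_of_pow_eq_one hone
        have := Nat.le_of_dvd (by omega) hd
        omega
      · apply bp_lemB hij hjn hin hkn hki hkj
        have hcomm : (bpancake n k * bpancake n i) * (bpancake n i * bpancake n j)
            = (bpancake n i * bpancake n j) * (bpancake n k * bpancake n i) := by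
          rw [hEq2]
          exact ((Commute.refl (bpancake n i * bpancake n j)).pow_left s).eq
        have hstep : bpancake n k * bpancake n j
            = (bpancake n k * bpancake n i) * (bpancake n i * bpancake n j) := by
          rw [mul_assoc, ← mul_assoc (bpancake n i) (bpancake n i) (bpancake n j), hii,
            one_mul]
        rw [hstep, hcomm]
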